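/- arXiv:1106.5305 — 3 statements merged into one kernel-verified Lean document; each statement's English description precedes it below -/
import Mathlib

section
/- The functor H_0∘F^S is not essentially surjective: there exists an n-module M such that M is not isomorphic to H_0∘F^S(X,γ) for any topological space X and continuous function γ: X → ℝⁿ. -/
open CategoryTheory

noncomputable section

/-- The poset `ℝⁿ` with the product order (and the sup metric). -/
def Rn (n : ℕ) : Type := Fin n → ℝ

instance (n : ℕ) : PartialOrder (Rn n) := inferInstanceAs (PartialOrder (Fin n → ℝ))
instance (n : ℕ) : MetricSpace (Rn n) := inferInstanceAs (MetricSpace (Fin n → ℝ))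

/-- An `n`-module over the field `k`: a functor from the poset `(ℝⁿ, ≤)`
to the category of `k`-vector spaces. -/
abbrev NMod (k : Type) [Field k] (n : ℕ) := Rn n ⥤ ModuleCat.{0} k

/-- The vector `ε⃗ = ε•(1,…,1)` added to `a`. -/
def vshift {n : ℕ} (ε : ℝ) (a : Rn n) : Rn n := fun j => a j + ε

lemma Rn.le_def {n : ℕ} (a b : Rn n) : a ≤ b ↔ ∀ j, a j ≤ b j := Iff.rfl

lemma le_vshift {n : ℕ} {ε : ℝ} (hε : 0 ≤ ε) (a : Rn n) : a ≤ vshift ε a :=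
  (Rn.le_def _ _).2 fun j => by simp [vshift]; linarith

lemma le_vshift₂ {n : ℕ} {ε : ℝ} (hε : 0 ≤ ε) (a : Rn n) : a ≤ vshift ε (vshift ε a) :=
  le_trans (le_vshift hε a) (le_vshift hε _)

lemma vshift_mono {n : ℕ} (ε : ℝ) {a b : Rn n} (h : a ≤ b) : vshift ε a ≤ vshift ε b :=
  (Rn.le_def _ _).2 fun j => by simpa [vshift] using (Rn.le_def _ _).1 h j

/-- `M` and `N` are `ε`-interleaved. -/
def Interleaved {k : Type} [Field k] {n : ℕ} (ε : ℝ) (M N : NMod k n) : Prop :=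
  ∃ hε : 0 ≤ ε,
  ∃ f : ∀ a : Rn n, M.obj a ⟶ N.obj (vshift ε a),
  ∃ g : ∀ a : Rn n, N.obj a ⟶ M.obj (vshift ε a),
    (∀ (a b : Rn n) (h : a ≤ b),
        M.map (homOfLE h) ≫ f b = f a ≫ N.map (homOfLE (vshift_mono ε h))) ∧
    (∀ (a b : Rn n) (h : a ≤ b),
        N.map (homOfLE h) ≫ g b = g a ≫ M.map (homOfLE (vshift_mono ε h))) ∧
    (∀ a : Rn n, f a ≫ g (vshift ε a) = M.map (homOfLE (le_vshift₂ hε a))) ∧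
    (∀ a : Rn n, g a ≫ f (vshift ε a) = N.map (homOfLE (le_vshift₂ hε a)))

/-- The interleaving distance. -/
def dI {k : Type} [Field k] {n : ℕ} (M N : NMod k n) : ENNReal :=
  ⨅ (ε : ℝ) (_ : Interleaved ε M N), ENNReal.ofReal ε

/-- Singular chain complex functor with coefficients in `k`. -/
def singularChains (k : Type) [Field k] : TopCat.{0} ⥤ ChainComplex (ModuleCat.{0} k) ℕ :=
  TopCat.toSSet ⋙ ((SimplicialObject.whiskering _ _).obj (ModuleCat.free k)) ⋙
    AlgebraicTopology.alternatingFaceMapComplex _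

/-- Singular homology functor `H_i` with coefficients in `k`. -/
def singularHomology (k : Type) [Field k] (i : ℕ) : TopCat.{0} ⥤ ModuleCat.{0} k :=
  singularChains k ⋙ HomologicalComplex.homologyFunctor _ _ i

/-- The sublevel set filtration `F^S(X, γ)`. -/
def sublevelFiltration {n : ℕ} (X : TopCat.{0}) (γ : C(X, Rn n)) : Rn n ⥤ TopCat.{0} where
  obj a := TopCat.of {x : X // γ x ≤ a}
  map {a b} h := TopCat.ofHom ⟨fun x => ⟨x.1, le_trans x.2 (leOfHom h)⟩, by
    exact Continuous.subtype_mk (continuous_subtype_val) _⟩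
  map_id := by intros; rfl
  map_comp := by intros; rfl

/-- The persistent homology `n`-module `H_i ∘ F^S(X, γ)`. -/
def persistentHomology (k : Type) [Field k] {n : ℕ} (i : ℕ) (X : TopCat.{0})
    (γ : C(X, Rn n)) : NMod k n :=
  sublevelFiltration X γ ⋙ singularHomology k i

/-- A pseudometric on isomorphism classes of `n`-modules. -/
structure IsPseudometricOnIso {k : Type} [Field k] {n : ℕ}
    (d : NMod k n → NMod k n → ENNReal) : Prop where
  refl : ∀ M, d M M = 0
  symm : ∀ M N, d M N = d N M
  triangle : ∀ L M N, d L N ≤ d L M + d M N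
  congr_left : ∀ M M' N, Nonempty (M ≅ M') → d M N = d M' N

/-- An object of the category `C^S`: a topological space with an `ℝⁿ`-valued
continuous function. -/
structure CSObj (n : ℕ) where
  X : TopCat.{0}
  γ : C(X, Rn n)

open scoped Classical in
/-- The metric `d^S` on objects of `C^S`. -/
def dS {n : ℕ} (T₁ T₂ : CSObj n) : ENNReal :=
  if h : T₁.X = T₂.X then
    ⨆ x : T₁.X, edist (T₁.γ x) (T₂.γ (cast (congrArg (fun Z : TopCat.{0} => (Z : Type)) h) x))
  else ⊤

/-- `d` is `i`-stable. -/
def IStable (k : Type) [Field k] (n : ℕ) (i : ℕ) (d : NMod k n → NMod k n → ENNReal) : Prop :=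
  ∀ T₁ T₂ : CSObj n,
    d (persistentHomology k i T₁.X T₁.γ) (persistentHomology k i T₂.X T₂.γ) ≤ dS T₁ T₂



section Aux

open CategoryTheory.Limits NNReal

open scoped Classical in
/-- The "bad" module: `k` at every point, zero structure maps. -/
def badMod (k : Type) [Field k] (n : ℕ) : NMod k n where
  obj _ := ModuleCat.of k k
  map {a b} _ := if a = b then 𝟙 (ModuleCat.of k k) else 0
  map_id _ := if_pos rfl
  map_comp {a b c} f g := by
    by_cases hab : a = b
    · subst hab; rw [if_pos rfl, Category.id_comp]
    · rw [if_neg hab, zero_comp, if_neg]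
      intro hac
      exact hab (le_antisymm (leOfHom f) ((leOfHom g).trans (le_of_eq hac.symm)))

open scoped Classical in
lemma badMod_map_eq_zero (k : Type) [Field k] (n : ℕ) {a b : Rn n} (f : a ⟶ b) (h : a ≠ b) :
    (badMod k n).map f = 0 := by
  show (if a = b then 𝟙 (ModuleCat.of k k) else 0) = 0
  exact if_neg h

instance simplexNonempty (x : SimplexCategory) : Nonempty (SimplexCategory.toTop.obj x) :=
  inferInstance

instance (x : SimplexCategory) : Nonempty (SimplexCategory.toTop.obj x) := simplexNonempty x

lemma pt_d10 (k : Type) [Field k] : ((singularChains k).obj (TopCat.of PUnit)).d 1 0 = 0 := by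
  have heq : ((singularChains k).obj (TopCat.of PUnit)).d 1 0 =
      AlgebraicTopology.AlternatingFaceMapComplex.objD
        (((SimplicialObject.whiskering _ _).obj (ModuleCat.free k)).obj
          (TopCat.toSSet.obj (TopCat.of PUnit))) 0 :=
    AlgebraicTopology.alternatingFaceMapComplex_obj_d _ _
  rw [heq, AlgebraicTopology.AlternatingFaceMapComplex.objD]
  have hδ : (((SimplicialObject.whiskering _ _).obj (ModuleCat.free k)).obj
        (TopCat.toSSet.obj (TopCat.of PUnit))).δ (1 : Fin 2) =
      (((SimplicialObject.whiskering _ _).obj (ModuleCat.free k)).obj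
        (TopCat.toSSet.obj (TopCat.of PUnit))).δ (0 : Fin 2) := by
    show (ModuleCat.free k).map ((TopCat.toSSet.obj (TopCat.of PUnit)).δ (1 : Fin 2)) =
         (ModuleCat.free k).map ((TopCat.toSSet.obj (TopCat.of PUnit)).δ (0 : Fin 2))
    congr 1
  rw [Fin.sum_univ_two, hδ]
  simp
  erw [neg_smul, one_smul, add_neg_cancel]
  rfl

/-- `H₀` of the one-point space is not zero. -/
lemma pt_H0_ne (k : Type) [Field k] :
    ¬ IsZero ((singularHomology k 0).obj (TopCat.of PUnit)) := by
  intro h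
  set K := (singularChains k).obj (TopCat.of PUnit) with hK
  have h2 : IsZero (K.opcycles 0) := h.of_iso (ChainComplex.isoHomologyι₀ K).symm
  have := K.isIso_pOpcycles 1 0 (ChainComplex.prev ℕ 0) (pt_d10 k)
  have h3 : IsZero (K.X 0) := h2.of_iso (asIso (K.pOpcycles 0))
  have hid : 𝟙 (K.X 0) = 0 := h3.eq_of_src _ _
  set T := (TopCat.toSSet.obj (TopCat.of PUnit)).obj (Opposite.op (SimplexCategory.mk 0)) with hT
  have hTne : Nonempty T :=
    ⟨(TopCat.toSSetObjEquiv _ _).symm (ContinuousMap.const _ PUnit.unit)⟩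
  have h4 : (Finsupp.single (Classical.arbitrary T) (1:k) : T →₀ k) = 0 := by
    have := congrArg (fun (φ : K.X 0 ⟶ K.X 0) =>
      φ (show K.X 0 from Finsupp.single (Classical.arbitrary T) (1:k))) hid
    exact this
  exact one_ne_zero (Finsupp.single_eq_zero.1 h4)

/-- `H₀` of an empty space is zero. -/
lemma empty_H0 (k : Type) [Field k] (Y : TopCat.{0}) (hY : IsEmpty Y) :
    IsZero ((singularHomology k 0).obj Y) := by
  set K := (singularChains k).obj Y with hK
  have hx : IsZero (K.X 0) := by
    have hE : IsEmpty ((TopCat.toSSet.obj Y).obj (Opposite.op (SimplexCategory.mk 0))) := by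
      constructor
      intro f
      exact hY.false ((TopCat.toSSetObjEquiv Y _ f)
        (Classical.arbitrary _))
    have : Subsingleton (K.X 0) := by
      show Subsingleton
        (((TopCat.toSSet.obj Y).obj (Opposite.op (SimplexCategory.mk 0))) →₀ k)
      constructor
      intro f g
      apply Finsupp.ext
      intro a
      exact isEmptyElim a
    exact ModuleCat.isZero_of_subsingleton _
  have hEx : K.ExactAt 0 := by
    rw [HomologicalComplex.exactAt_iff]
    exact ShortComplex.exact_of_isZero_X₂ _ hx
  exact (HomologicalComplex.exactAt_iff_isZero_homology _ _).1 hEx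

end Aux

/-- **Remark (`H_0 ∘ F^S` is not essentially surjective).**
There is an `n`-module `M` not isomorphic to `H_0 ∘ F^S(X, γ)` for any topological
space `X` and continuous `γ : X → ℝⁿ`. -/
theorem not_essSurj_persistentHomology_zero (k : Type) [Field k] (n : ℕ) (hn : 1 ≤ n) :
    ∃ M : NMod k n, ∀ (X : TopCat.{0}) (γ : C(X, Rn n)),
      ¬ Nonempty (persistentHomology k 0 X γ ≅ M) := by
  classical
  refine ⟨badMod k n, ?_⟩
  rintro X γ ⟨e⟩
  set a : Rn n := fun _ => 0 with ha
  set b : Rn n := fun _ => 1 with hb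
  have hab : a ≤ b := (Rn.le_def a b).2 fun j => by norm_num [ha, hb]
  have hne : a ≠ b := by
    intro h
    have := congrFun h ⟨0, hn⟩
    norm_num [ha, hb] at this
  set P := persistentHomology k 0 X γ with hP
  set f : a ⟶ b := homOfLE hab with hf
  -- the sublevel set at `a` is nonempty
  have hXa : Nonempty {x : X // γ x ≤ a} := by
    by_contra hcon
    have hz : Limits.IsZero (P.obj a) :=
      empty_H0 k ((sublevelFiltration X γ).obj a) (not_nonempty_iff.1 hcon)
    have hz' : Limits.IsZero ((badMod k n).obj a) := hz.of_iso (e.app a).symm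
    have hid : 𝟙 (ModuleCat.of k k) = 0 := hz'.eq_of_src _ _
    have := congrArg (fun (φ : ModuleCat.of k k ⟶ ModuleCat.of k k) => φ (show ModuleCat.of k k from (1 : k))) hid
    exact one_ne_zero (α := k) this
  obtain ⟨x₀⟩ := hXa
  -- maps through the point
  set pt : TopCat.{0} := TopCat.of PUnit with hpt
  set Xa := (sublevelFiltration X γ).obj a with hXa'
  set Xb := (sublevelFiltration X γ).obj b with hXb'
  set u : pt ⟶ Xa := TopCat.ofHom ⟨fun _ => x₀, continuous_const⟩ with hu
  set ι : Xa ⟶ Xb := (sublevelFiltration X γ).map f with hι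
  set v : Xb ⟶ pt := TopCat.ofHom ⟨fun _ => PUnit.unit, continuous_const⟩ with hv
  have huv : u ≫ ι ≫ v = 𝟙 pt := by
    ext x
  -- the structure map of `P` is zero
  have hM0 : (badMod k n).map f = 0 := badMod_map_eq_zero k n f hne
  have hP0 : P.map f = 0 := by
    have hnat := e.hom.naturality f
    calc P.map f = (P.map f ≫ e.hom.app b) ≫ e.inv.app b := by simp
      _ = (e.hom.app a ≫ (badMod k n).map f) ≫ e.inv.app b := by rw [hnat]
      _ = 0 := by rw [hM0]; simp
  -- hence the identity of `H₀(pt)` is zero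
  set H := singularHomology k 0 with hH
  have hzero : 𝟙 (H.obj pt) = 0 := by
    calc 𝟙 (H.obj pt) = H.map (𝟙 pt) := (H.map_id pt).symm
      _ = H.map (u ≫ ι ≫ v) := by rw [huv]
      _ = H.map u ≫ H.map ι ≫ H.map v := by rw [H.map_comp, H.map_comp]
      _ = H.map u ≫ P.map f ≫ H.map v := rfl
      _ = 0 := by
        have h0 : P.map f ≫ H.map v = 0 := by rw [hP0]; exact Limits.zero_comp
        exact (congrArg (fun g => H.map u ≫ g) h0).trans Limits.comp_zero
  exact pt_H0_ne k ((Limits.IsZero.iff_id_eq_zero (H.obj pt)).2 hzero)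


end
end

section
/- (Algebraic realization of interleavings.) Let M and N be ε-interleaved n-modules. Then there exist n-graded sets W₁, W₂ and sets Y₁, Y₂ of homogeneous elements of the free n-module ⟨W₁ ∪ W₂⟩ such that every element of Y₁ lies in the submodule ⟨W₁, W₂(−ε)⟩, every element of Y₂ lies in the submodule ⟨W₁(−ε), W₂⟩, and M ≅ ⟨W₁, W₂(−ε) | Y₁, Y₂(−ε)⟩ while N ≅ ⟨W₁(−ε), W₂ | Y₁(−ε), Y₂⟩. -/
open CategoryTheory

noncomputable section

/-- The free `n`-module on the `n`-graded set `(W, gr)`, i.e. `⊕_{w ∈ W} P_n(-gr w)`. -/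
def grFree (k : Type) [Field k] (n : ℕ) (W : Type) (gr : W → Rn n) : NMod k n where
  obj a := ModuleCat.of k ({w : W // gr w ≤ a} →₀ k)
  map {a b} h := ModuleCat.ofHom (Finsupp.lmapDomain k k
    (fun w : {w // gr w ≤ a} => (⟨w.1, le_trans w.2 (leOfHom h)⟩ : {w // gr w ≤ b})))
  map_id := fun _ => ModuleCat.hom_ext (Finsupp.lmapDomain_id k k)
  map_comp := fun {a b c} f g => by
    exact ModuleCat.hom_ext <| Finsupp.lmapDomain_comp k k
      (fun w : {w // gr w ≤ a} => (⟨w.1, le_trans w.2 (leOfHom f)⟩ : {w // gr w ≤ b}))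
      (fun w : {w // gr w ≤ b} => (⟨w.1, le_trans w.2 (leOfHom g)⟩ : {w // gr w ≤ c}))


/-- The set of relations at grade `b` determined by a family of homogeneous elements
`v y` of grades `grY y` of the `n`-module `A`. -/
def relSet {k : Type} [Field k] {n : ℕ} (A : NMod k n) {Y : Type} (grY : Y → Rn n)
    (v : ∀ y : Y, A.obj (grY y)) (b : Rn n) : Set (A.obj b) :=
  {x | ∃ (y : Y) (h : grY y ≤ b), x = A.map (homOfLE h) (v y)}

/-- The quotient of the `n`-module `A` by the submodule generated by the homogeneous
elements `v y`, `y : Y`. -/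
def grQuot {k : Type} [Field k] {n : ℕ} (A : NMod k n) {Y : Type} (grY : Y → Rn n)
    (v : ∀ y : Y, A.obj (grY y)) : NMod k n where
  obj b := ModuleCat.of k ((A.obj b) ⧸ Submodule.span k (relSet A grY v b))
  map {a b} h := ModuleCat.ofHom <| Submodule.mapQ _ _ (A.map h).hom (by
    rw [Submodule.span_le]
    rintro x ⟨y, hy, rfl⟩
    refine Submodule.subset_span ?_
    refine ⟨y, le_trans hy (leOfHom h), ?_⟩
    have h2 : (homOfLE (le_trans hy (leOfHom h))) = homOfLE hy ≫ h := rfl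
    rw [h2, A.map_comp]
    rfl)
  map_id := by
    intro a
    ext1
    refine Submodule.linearMap_qext _ ?_
    ext x
    simp only [LinearMap.comp_apply, Submodule.mkQ_apply, Submodule.mapQ_apply,
      CategoryTheory.Functor.map_id]
    rfl
  map_comp := by
    intro a b c f g
    ext1
    refine Submodule.linearMap_qext _ ?_
    ext x
    simp only [LinearMap.comp_apply, Submodule.mkQ_apply, Submodule.mapQ_apply,
      CategoryTheory.Functor.map_comp, CategoryTheory.comp_apply]
    rfl

/-- Grades on `W₁ ⊕ W₂`, where the grades of `W₁` are raised by `δ₁` and the grades of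
`W₂` are raised by `δ₂`; e.g. `sumGr gr₁ gr₂ 0 ε` is the graded set `W₁ ∪ W₂(-ε)`. -/
def sumGr {n : ℕ} {W₁ W₂ : Type} (gr₁ : W₁ → Rn n) (gr₂ : W₂ → Rn n) (δ₁ δ₂ : ℝ) :
    W₁ ⊕ W₂ → Rn n :=
  Sum.elim (fun w => vshift δ₁ (gr₁ w)) (fun w => vshift δ₂ (gr₂ w))

lemma sumGr_swap_le₁ {n : ℕ} {W₁ W₂ : Type} {gr₁ : W₁ → Rn n} {gr₂ : W₂ → Rn n} {ε : ℝ}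
    (hε : 0 ≤ ε) (w : W₁ ⊕ W₂) (g : Rn n) (h : sumGr gr₁ gr₂ ε 0 w ≤ g) :
    sumGr gr₁ gr₂ 0 ε w ≤ vshift ε g := by
  cases w with
  | inl w =>
      refine (Rn.le_def _ _).2 fun j => ?_
      have := (Rn.le_def _ _).1 h j
      simp only [sumGr, Sum.elim_inl, vshift] at this ⊢
      linarith
  | inr w =>
      refine (Rn.le_def _ _).2 fun j => ?_
      have := (Rn.le_def _ _).1 h j
      simp only [sumGr, Sum.elim_inr, vshift] at this ⊢
      linarith

lemma sumGr_swap_le₂ {n : ℕ} {W₁ W₂ : Type} {gr₁ : W₁ → Rn n} {gr₂ : W₂ → Rn n} {ε : ℝ}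
    (hε : 0 ≤ ε) (w : W₁ ⊕ W₂) (g : Rn n) (h : sumGr gr₁ gr₂ 0 ε w ≤ g) :
    sumGr gr₁ gr₂ ε 0 w ≤ vshift ε g := by
  cases w with
  | inl w =>
      refine (Rn.le_def _ _).2 fun j => ?_
      have := (Rn.le_def _ _).1 h j
      simp only [sumGr, Sum.elim_inl, vshift] at this ⊢
      linarith
  | inr w =>
      refine (Rn.le_def _ _).2 fun j => ?_
      have := (Rn.le_def _ _).1 h j
      simp only [sumGr, Sum.elim_inr, vshift] at this ⊢
      linarith

/-- The canonical inclusion sending a homogeneous element of `⟨W₁(-ε), W₂⟩` of grade `g`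
to a homogeneous element of `⟨W₁, W₂(-ε)⟩` of grade `g + ε⃗`. -/
def shiftEmbed₁ {k : Type} [Field k] {n : ℕ} {W₁ W₂ : Type} (gr₁ : W₁ → Rn n)
    (gr₂ : W₂ → Rn n) {ε : ℝ} (hε : 0 ≤ ε) (g : Rn n) :
    (grFree k n (W₁ ⊕ W₂) (sumGr gr₁ gr₂ ε 0)).obj g ⟶
      (grFree k n (W₁ ⊕ W₂) (sumGr gr₁ gr₂ 0 ε)).obj (vshift ε g) :=
  ModuleCat.ofHom (Finsupp.lmapDomain k k (fun w : {w // sumGr gr₁ gr₂ ε 0 w ≤ g} =>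
    (⟨w.1, sumGr_swap_le₁ hε w.1 g w.2⟩ : {w // sumGr gr₁ gr₂ 0 ε w ≤ vshift ε g})))

/-- The canonical inclusion sending a homogeneous element of `⟨W₁, W₂(-ε)⟩` of grade `g`
to a homogeneous element of `⟨W₁(-ε), W₂⟩` of grade `g + ε⃗`. -/
def shiftEmbed₂ {k : Type} [Field k] {n : ℕ} {W₁ W₂ : Type} (gr₁ : W₁ → Rn n)
    (gr₂ : W₂ → Rn n) {ε : ℝ} (hε : 0 ≤ ε) (g : Rn n) :
    (grFree k n (W₁ ⊕ W₂) (sumGr gr₁ gr₂ 0 ε)).obj g ⟶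
      (grFree k n (W₁ ⊕ W₂) (sumGr gr₁ gr₂ ε 0)).obj (vshift ε g) :=
  ModuleCat.ofHom (Finsupp.lmapDomain k k (fun w : {w // sumGr gr₁ gr₂ 0 ε w ≤ g} =>
    (⟨w.1, sumGr_swap_le₂ hε w.1 g w.2⟩ : {w // sumGr gr₁ gr₂ ε 0 w ≤ vshift ε g})))

variable {k : Type} [Field k] {n : ℕ}

/-- evaluation map from the free module -/
def evalHom (A : NMod k n) {W : Type} (gr : W → Rn n) (u : ∀ w, A.obj (gr w)) (b : Rn n) :
    (grFree k n W gr).obj b ⟶ A.obj b :=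
  ModuleCat.ofHom (Finsupp.linearCombination k (fun wh : {w // gr w ≤ b} => A.map (homOfLE wh.2) (u wh.1)))

lemma evalHom_single (A : NMod k n) {W : Type} (gr : W → Rn n) (u : ∀ w, A.obj (gr w))
    (b : Rn n) (w : {w // gr w ≤ b}) (c : k) :
    evalHom A gr u b (Finsupp.single w c) = c • A.map (homOfLE w.2) (u w.1) := by
  rw [evalHom]; erw [Finsupp.linearCombination_single]

lemma map_map_eq (A : NMod k n) {a b c : Rn n} (h1 : a ≤ b) (h2 : b ≤ c) (h3 : a ≤ c)
    (x : A.obj a) :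
    A.map (homOfLE h2) (A.map (homOfLE h1) x) = A.map (homOfLE h3) x := by
  change (A.map (homOfLE h1) ≫ A.map (homOfLE h2)) x = _
  rw [← A.map_comp, homOfLE_comp]

lemma map_eq_map (A : NMod k n) {a b : Rn n} (h1 h2 : a ≤ b) (x : A.obj a) :
    A.map (homOfLE h1) x = A.map (homOfLE h2) x := rfl

lemma evalHom_natural (A : NMod k n) {W : Type} (gr : W → Rn n) (u : ∀ w, A.obj (gr w))
    {a b : Rn n} (h : a ≤ b) (x : (grFree k n W gr).obj a) :
    evalHom A gr u b ((grFree k n W gr).map (homOfLE h) x)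
      = A.map (homOfLE h) (evalHom A gr u a x) := by
  induction x using Finsupp.induction_linear with
  | zero => erw [map_zero, map_zero]
  | add p q hp hq => erw [map_add, map_add, map_add, map_add, hp, hq]
  | single w c =>
    have : ((grFree k n W gr).map (homOfLE h)) (Finsupp.single w c)
        = Finsupp.single (⟨w.1, le_trans w.2 h⟩ : {w // gr w ≤ b}) c := by
      show Finsupp.mapDomain _ _ = _
      rw [Finsupp.mapDomain_single]
    rw [this, evalHom_single, evalHom_single, map_smul]
    congr 1
    exact (map_map_eq A w.2 h _ (u w.1)).symm

lemma span_relSet_eq_ker (A B : NMod k n) (φ : ∀ b, A.obj b ⟶ B.obj b)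
    (hφ : ∀ {a b : Rn n} (h : a ≤ b) (x : A.obj a),
      φ b (A.map (homOfLE h) x) = B.map (homOfLE h) (φ a x))
    {Y : Type} (grY : Y → Rn n) (v : ∀ y, A.obj (grY y))
    (hker : ∀ y, φ (grY y) (v y) = 0)
    (hfull : ∀ b (x : A.obj b), φ b x = 0 → x ∈ relSet A grY v b) (b : Rn n) :
    Submodule.span k (relSet A grY v b) = LinearMap.ker (φ b).hom := by
  apply le_antisymm
  · rw [Submodule.span_le]
    rintro x ⟨y, hy, rfl⟩
    simp only [SetLike.mem_coe, LinearMap.mem_ker]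
    rw [hφ hy (v y), hker y, map_zero]
  · intro x hx
    exact Submodule.subset_span (hfull b x hx)

lemma grQuot_iso (A B : NMod k n) (φ : ∀ b, A.obj b ⟶ B.obj b)
    (hφ : ∀ {a b : Rn n} (h : a ≤ b) (x : A.obj a),
      φ b (A.map (homOfLE h) x) = B.map (homOfLE h) (φ a x))
    {Y : Type} (grY : Y → Rn n) (v : ∀ y, A.obj (grY y))
    (hspan : ∀ b, Submodule.span k (relSet A grY v b) = LinearMap.ker (φ b).hom)
    (hsurj : ∀ b, Function.Surjective (φ b)) :
    Nonempty (B ≅ grQuot A grY v) := by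
  let ψ : ∀ b, (grQuot A grY v).obj b ⟶ B.obj b :=
    fun b => ModuleCat.ofHom (Submodule.liftQ _ (φ b).hom (hspan b).le)
  have hψ : ∀ (b : Rn n) (x : A.obj b), ψ b (Submodule.Quotient.mk x) = φ b x :=
    fun b x => rfl
  have hbij : ∀ b, Function.Bijective (ψ b).hom := by
    intro b
    constructor
    · rw [← LinearMap.ker_eq_bot]
      exact Submodule.ker_liftQ_eq_bot _ _ _ (hspan b).ge
    · intro x
      obtain ⟨y, hy⟩ := hsurj b x
      exact ⟨Submodule.Quotient.mk y, hy⟩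
  refine ⟨(NatIso.ofComponents
    (fun b => (LinearEquiv.ofBijective (ψ b).hom (hbij b)).toModuleIso) ?_).symm⟩
  intro a b h
  ext1
  refine Submodule.linearMap_qext _ ?_
  ext x
  show ψ b ((grQuot A grY v).map h (Submodule.Quotient.mk x))
      = B.map h (ψ a (Submodule.Quotient.mk x))
  have : (grQuot A grY v).map h (Submodule.Quotient.mk x)
      = Submodule.Quotient.mk (A.map h x) := rfl
  rw [this, hψ, hψ]
  have h' : a ≤ b := leOfHom h
  have hh : h = homOfLE h' := rfl
  rw [hh, hφ h' x]

/-- **Corollary (algebraic realization of interleavings).**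
If `M` and `N` are `ε`-interleaved `n`-modules, then there are `n`-graded sets
`W₁, W₂` and families `Y₁, Y₂` of homogeneous elements, with the elements of `Y₁`
homogeneous elements of `⟨W₁, W₂(-ε)⟩` and the elements of `Y₂` homogeneous elements of
`⟨W₁(-ε), W₂⟩`, such that `M ≅ ⟨W₁, W₂(-ε) | Y₁, Y₂(-ε)⟩` and
`N ≅ ⟨W₁(-ε), W₂ | Y₁(-ε), Y₂⟩`. -/
theorem algebraic_realization_of_interleaving (k : Type) [Field k] (n : ℕ) (hn : 1 ≤ n)
    (ε : ℝ) (hε : 0 ≤ ε) (M N : NMod k n) (h : Interleaved ε M N) :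
    ∃ (W₁ W₂ : Type) (gr₁ : W₁ → Rn n) (gr₂ : W₂ → Rn n)
      (Y₁ Y₂ : Type) (grY₁ : Y₁ → Rn n) (grY₂ : Y₂ → Rn n)
      (v₁ : ∀ y : Y₁, (grFree k n (W₁ ⊕ W₂) (sumGr gr₁ gr₂ 0 ε)).obj (grY₁ y))
      (v₂ : ∀ y : Y₂, (grFree k n (W₁ ⊕ W₂) (sumGr gr₁ gr₂ ε 0)).obj (grY₂ y)),
      Nonempty (M ≅ grQuot (grFree k n (W₁ ⊕ W₂) (sumGr gr₁ gr₂ 0 ε))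
          (Sum.elim grY₁ fun y => vshift ε (grY₂ y))
          (fun y => Sum.rec (motive := fun y => ((grFree k n (W₁ ⊕ W₂)
                (sumGr gr₁ gr₂ 0 ε)).obj ((Sum.elim grY₁ fun y => vshift ε (grY₂ y)) y)))
            (fun y₁ => v₁ y₁) (fun y₂ => shiftEmbed₁ gr₁ gr₂ hε (grY₂ y₂) (v₂ y₂)) y)) ∧
      Nonempty (N ≅ grQuot (grFree k n (W₁ ⊕ W₂) (sumGr gr₁ gr₂ ε 0))
          (Sum.elim (fun y => vshift ε (grY₁ y)) grY₂)
          (fun y => Sum.rec (motive := fun y => ((grFree k n (W₁ ⊕ W₂)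
                (sumGr gr₁ gr₂ ε 0)).obj ((Sum.elim (fun y => vshift ε (grY₁ y)) grY₂) y)))
            (fun y₁ => shiftEmbed₂ gr₁ gr₂ hε (grY₁ y₁) (v₁ y₁)) (fun y₂ => v₂ y₂) y)) := by
  classical
  obtain ⟨hε', f, g, hf, hg, hgf, hfg⟩ := h
  have hf' : ∀ {a b : Rn n} (hab : a ≤ b) (x : M.obj a),
      f b (M.map (homOfLE hab) x) = N.map (homOfLE (vshift_mono ε hab)) (f a x) :=
    fun {a b} hab x => ConcreteCategory.congr_hom (hf a b hab) x
  have hg' : ∀ {a b : Rn n} (hab : a ≤ b) (x : N.obj a),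
      g b (N.map (homOfLE hab) x) = M.map (homOfLE (vshift_mono ε hab)) (g a x) :=
    fun {a b} hab x => ConcreteCategory.congr_hom (hg a b hab) x
  have hgf' : ∀ (a : Rn n) (x : M.obj a),
      g (vshift ε a) (f a x) = M.map (homOfLE (le_vshift₂ hε' a)) x :=
    fun a x => ConcreteCategory.congr_hom (hgf a) x
  have hfg' : ∀ (a : Rn n) (x : N.obj a),
      f (vshift ε a) (g a x) = N.map (homOfLE (le_vshift₂ hε' a)) x :=
    fun a x => ConcreteCategory.congr_hom (hfg a) x
  let W₁ := Σ a : Rn n, M.obj a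
  let W₂ := Σ a : Rn n, N.obj a
  let gr₁ : W₁ → Rn n := Sigma.fst
  let gr₂ : W₂ → Rn n := Sigma.fst
  have h0 : ∀ a : Rn n, a ≤ vshift 0 a := le_vshift le_rfl
  let uM : ∀ w : W₁ ⊕ W₂, M.obj (sumGr gr₁ gr₂ 0 ε w) :=
    fun w => Sum.rec (motive := fun w => M.obj (sumGr gr₁ gr₂ 0 ε w))
      (fun w₁ => M.map (homOfLE (h0 w₁.1)) w₁.2) (fun w₂ => g w₂.1 w₂.2) w
  let uN : ∀ w : W₁ ⊕ W₂, N.obj (sumGr gr₁ gr₂ ε 0 w) :=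
    fun w => Sum.rec (motive := fun w => N.obj (sumGr gr₁ gr₂ ε 0 w))
      (fun w₁ => f w₁.1 w₁.2) (fun w₂ => N.map (homOfLE (h0 w₂.1)) w₂.2) w
  let φM := evalHom M (sumGr gr₁ gr₂ 0 ε) uM
  let φN := evalHom N (sumGr gr₁ gr₂ ε 0) uN
  have hMsurj : ∀ b, Function.Surjective (φM b) := by
    intro b x
    have hb : sumGr gr₁ gr₂ 0 ε (Sum.inl ⟨b, x⟩) ≤ b :=
      (Rn.le_def _ _).2 fun j => by simp [sumGr, vshift, gr₁]
    refine ⟨Finsupp.single ⟨Sum.inl ⟨b, x⟩, hb⟩ 1, ?_⟩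
    rw [evalHom_single, one_smul]
    show M.map (homOfLE hb) (M.map (homOfLE (h0 b)) x) = x
    refine (map_map_eq M (h0 b) hb (le_refl b) x).trans ?_
    have hid : M.map (homOfLE (le_refl b)) = 𝟙 (M.obj b) := M.map_id b
    rw [hid]
    rfl
  have hNsurj : ∀ b, Function.Surjective (φN b) := by
    intro b x
    have hb : sumGr gr₁ gr₂ ε 0 (Sum.inr ⟨b, x⟩) ≤ b :=
      (Rn.le_def _ _).2 fun j => by simp [sumGr, vshift, gr₂]
    refine ⟨Finsupp.single ⟨Sum.inr ⟨b, x⟩, hb⟩ 1, ?_⟩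
    rw [evalHom_single, one_smul]
    show N.map (homOfLE hb) (N.map (homOfLE (h0 b)) x) = x
    refine (map_map_eq N (h0 b) hb (le_refl b) x).trans ?_
    have hid : N.map (homOfLE (le_refl b)) = 𝟙 (N.obj b) := N.map_id b
    rw [hid]
    rfl
  have key₁ : ∀ (b : Rn n) (x : (grFree k n (W₁ ⊕ W₂) (sumGr gr₁ gr₂ ε 0)).obj b),
      φM (vshift ε b) (shiftEmbed₁ gr₁ gr₂ hε b x) = g b (φN b x) := by
    intro b x
    induction x using Finsupp.induction_linear with
    | zero => erw [map_zero, map_zero]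
    | add p q hp hq => erw [map_add, map_add, map_add, map_add, hp, hq]
    | single w c =>
      have hmap : shiftEmbed₁ gr₁ gr₂ hε b (Finsupp.single w c)
          = Finsupp.single (⟨w.1, sumGr_swap_le₁ hε w.1 b w.2⟩ :
              {w // sumGr gr₁ gr₂ 0 ε w ≤ vshift ε b}) c := by
        show Finsupp.mapDomain _ _ = _
        rw [Finsupp.mapDomain_single]
      rw [hmap, evalHom_single, evalHom_single, map_smul]
      congr 1
      obtain ⟨w, hw⟩ := w
      cases w with
      | inl w₁ =>
        show M.map (homOfLE (sumGr_swap_le₁ hε (Sum.inl w₁) b hw))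
            (M.map (homOfLE (h0 w₁.1)) w₁.2)
            = g b (N.map (homOfLE hw) (f w₁.1 w₁.2))
        have p : w₁.1 ≤ vshift ε b :=
          le_trans (le_vshift hε' w₁.1) (le_trans hw (le_vshift hε' b))
        have e1 : M.map (homOfLE (sumGr_swap_le₁ hε (Sum.inl w₁) b hw))
            (M.map (homOfLE (h0 w₁.1)) w₁.2) = M.map (homOfLE p) w₁.2 :=
          map_map_eq M (h0 w₁.1) (sumGr_swap_le₁ hε (Sum.inl w₁) b hw) p w₁.2
        have e2 : g b (N.map (homOfLE hw) (f w₁.1 w₁.2))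
            = M.map (homOfLE (vshift_mono ε hw)) (g (vshift ε w₁.1) (f w₁.1 w₁.2)) :=
          hg' hw (f w₁.1 w₁.2)
        have e3 : M.map (homOfLE (vshift_mono ε hw)) (g (vshift ε w₁.1) (f w₁.1 w₁.2))
            = M.map (homOfLE (vshift_mono ε hw))
                (M.map (homOfLE (le_vshift₂ hε' w₁.1)) w₁.2) :=
          congrArg _ (hgf' w₁.1 w₁.2)
        have e4 : M.map (homOfLE (vshift_mono ε hw))
            (M.map (homOfLE (le_vshift₂ hε' w₁.1)) w₁.2) = M.map (homOfLE p) w₁.2 :=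
          map_map_eq M (le_vshift₂ hε' w₁.1) (vshift_mono ε hw) p w₁.2
        exact e1.trans ((e2.trans (e3.trans e4)).symm)
      | inr w₂ =>
        show M.map (homOfLE (sumGr_swap_le₁ hε (Sum.inr w₂) b hw)) (g w₂.1 w₂.2)
            = g b (N.map (homOfLE hw) (N.map (homOfLE (h0 w₂.1)) w₂.2))
        have q : w₂.1 ≤ b := le_trans (h0 w₂.1) hw
        have e1 : g b (N.map (homOfLE hw) (N.map (homOfLE (h0 w₂.1)) w₂.2))
            = g b (N.map (homOfLE q) w₂.2) :=
          congrArg _ (map_map_eq N (h0 w₂.1) hw q w₂.2)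
        have e2 : g b (N.map (homOfLE q) w₂.2)
            = M.map (homOfLE (vshift_mono ε q)) (g w₂.1 w₂.2) := hg' q w₂.2
        exact ((e1.trans e2)).symm
  have key₂ : ∀ (b : Rn n) (x : (grFree k n (W₁ ⊕ W₂) (sumGr gr₁ gr₂ 0 ε)).obj b),
      φN (vshift ε b) (shiftEmbed₂ gr₁ gr₂ hε b x) = f b (φM b x) := by
    intro b x
    induction x using Finsupp.induction_linear with
    | zero => erw [map_zero, map_zero]
    | add p q hp hq => erw [map_add, map_add, map_add, map_add, hp, hq]
    | single w c =>
      have hmap : shiftEmbed₂ gr₁ gr₂ hε b (Finsupp.single w c)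
          = Finsupp.single (⟨w.1, sumGr_swap_le₂ hε w.1 b w.2⟩ :
              {w // sumGr gr₁ gr₂ ε 0 w ≤ vshift ε b}) c := by
        show Finsupp.mapDomain _ _ = _
        rw [Finsupp.mapDomain_single]
      rw [hmap, evalHom_single, evalHom_single, map_smul]
      congr 1
      obtain ⟨w, hw⟩ := w
      cases w with
      | inr w₂ =>
        show N.map (homOfLE (sumGr_swap_le₂ hε (Sum.inr w₂) b hw))
            (N.map (homOfLE (h0 w₂.1)) w₂.2)
            = f b (M.map (homOfLE hw) (g w₂.1 w₂.2))
        have p : w₂.1 ≤ vshift ε b :=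
          le_trans (le_vshift hε' w₂.1) (le_trans hw (le_vshift hε' b))
        have e1 : N.map (homOfLE (sumGr_swap_le₂ hε (Sum.inr w₂) b hw))
            (N.map (homOfLE (h0 w₂.1)) w₂.2) = N.map (homOfLE p) w₂.2 :=
          map_map_eq N (h0 w₂.1) (sumGr_swap_le₂ hε (Sum.inr w₂) b hw) p w₂.2
        have e2 : f b (M.map (homOfLE hw) (g w₂.1 w₂.2))
            = N.map (homOfLE (vshift_mono ε hw)) (f (vshift ε w₂.1) (g w₂.1 w₂.2)) :=
          hf' hw (g w₂.1 w₂.2)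
        have e3 : N.map (homOfLE (vshift_mono ε hw)) (f (vshift ε w₂.1) (g w₂.1 w₂.2))
            = N.map (homOfLE (vshift_mono ε hw))
                (N.map (homOfLE (le_vshift₂ hε' w₂.1)) w₂.2) :=
          congrArg _ (hfg' w₂.1 w₂.2)
        have e4 : N.map (homOfLE (vshift_mono ε hw))
            (N.map (homOfLE (le_vshift₂ hε' w₂.1)) w₂.2) = N.map (homOfLE p) w₂.2 :=
          map_map_eq N (le_vshift₂ hε' w₂.1) (vshift_mono ε hw) p w₂.2
        exact e1.trans ((e2.trans (e3.trans e4)).symm)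
      | inl w₁ =>
        show N.map (homOfLE (sumGr_swap_le₂ hε (Sum.inl w₁) b hw)) (f w₁.1 w₁.2)
            = f b (M.map (homOfLE hw) (M.map (homOfLE (h0 w₁.1)) w₁.2))
        have q : w₁.1 ≤ b := le_trans (h0 w₁.1) hw
        have e1 : f b (M.map (homOfLE hw) (M.map (homOfLE (h0 w₁.1)) w₁.2))
            = f b (M.map (homOfLE q) w₁.2) :=
          congrArg _ (map_map_eq M (h0 w₁.1) hw q w₁.2)
        have e2 : f b (M.map (homOfLE q) w₁.2)
            = N.map (homOfLE (vshift_mono ε q)) (f w₁.1 w₁.2) := hf' q w₁.2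
        exact ((e1.trans e2)).symm
  let Y₁ := Σ b : Rn n, LinearMap.ker (φM b).hom
  let Y₂ := Σ b : Rn n, LinearMap.ker (φN b).hom
  let grY₁ : Y₁ → Rn n := Sigma.fst
  let grY₂ : Y₂ → Rn n := Sigma.fst
  let v₁ : ∀ y : Y₁, (grFree k n (W₁ ⊕ W₂) (sumGr gr₁ gr₂ 0 ε)).obj (grY₁ y) :=
    fun y => y.2.1
  let v₂ : ∀ y : Y₂, (grFree k n (W₁ ⊕ W₂) (sumGr gr₁ gr₂ ε 0)).obj (grY₂ y) :=
    fun y => y.2.1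
  refine ⟨W₁, W₂, gr₁, gr₂, Y₁, Y₂, grY₁, grY₂, v₁, v₂, ?_, ?_⟩
  · refine grQuot_iso _ M φM (fun {a b} h x => evalHom_natural M _ uM h x) _ _
      (fun b => span_relSet_eq_ker _ M φM (fun {a b} h x => evalHom_natural M _ uM h x)
        _ _ ?_ ?_ b) hMsurj
    · rintro (y₁ | y₂)
      · exact y₁.2.2
      · show φM _ (shiftEmbed₁ gr₁ gr₂ hε (grY₂ y₂) (v₂ y₂)) = 0
        rw [key₁ (grY₂ y₂) (v₂ y₂), y₂.2.2, map_zero]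
    · intro b x hx
      refine ⟨Sum.inl ⟨b, ⟨x, hx⟩⟩, le_refl b, ?_⟩
      show x = (grFree k n (W₁ ⊕ W₂) (sumGr gr₁ gr₂ 0 ε)).map (𝟙 b) x
      rw [CategoryTheory.Functor.map_id]
      rfl
  · refine grQuot_iso _ N φN (fun {a b} h x => evalHom_natural N _ uN h x) _ _
      (fun b => span_relSet_eq_ker _ N φN (fun {a b} h x => evalHom_natural N _ uN h x)
        _ _ ?_ ?_ b) hNsurj
    · rintro (y₁ | y₂)
      · show φN _ (shiftEmbed₂ gr₁ gr₂ hε (grY₁ y₁) (v₁ y₁)) = 0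
        rw [key₂ (grY₁ y₁) (v₁ y₁), y₁.2.2, map_zero]
      · exact y₂.2.2
    · intro b x hx
      refine ⟨Sum.inr ⟨b, ⟨x, hx⟩⟩, le_refl b, ?_⟩
      show x = (grFree k n (W₁ ⊕ W₂) (sumGr gr₁ gr₂ ε 0)).map (𝟙 b) x
      rw [CategoryTheory.Functor.map_id]
      rfl

end
end

section
/- (Stability of the interleaving distance.) Let k be any field, i ≥ 0, X a topological space, and γ₁, γ₂ : X → ℝⁿ continuous functions. Then the n-modules H_i∘F^S(X,γ₁) and H_i∘F^S(X,γ₂) are ε-interleaved for ε = sup_x ‖γ₁(x)−γ₂(x)‖_∞; consequently d_I(H_i∘F^S(X,γ₁), H_i∘F^S(X,γ₂)) ≤ sup_x ‖γ₁(x)−γ₂(x)‖_∞. -/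
open CategoryTheory

noncomputable section

lemma sublevel_interleaved (k : Type) [Field k] {n : ℕ} (i : ℕ) (X : TopCat.{0})
    (γ₁ γ₂ : C(X, Rn n)) {ε : ℝ} (hε : 0 ≤ ε)
    (hkey : ∀ (x : X) (j : Fin n), |γ₁ x j - γ₂ x j| ≤ ε) :
    Interleaved ε (persistentHomology k i X γ₁) (persistentHomology k i X γ₂) := by
  have h12 : ∀ (a : Rn n) (x : X), γ₁ x ≤ a → γ₂ x ≤ vshift ε a := by
    intro a x hx j
    have := (abs_le.1 (hkey x j)).1
    have := hx j
    simp only [vshift]; linarith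
  have h21 : ∀ (a : Rn n) (x : X), γ₂ x ≤ a → γ₁ x ≤ vshift ε a := by
    intro a x hx j
    have := (abs_le.1 (hkey x j)).2
    have := hx j
    simp only [vshift]; linarith
  let ι : ∀ a : Rn n, (sublevelFiltration X γ₁).obj a ⟶ (sublevelFiltration X γ₂).obj (vshift ε a) :=
    fun a => TopCat.ofHom ⟨fun x => ⟨x.1, h12 a x.1 x.2⟩, Continuous.subtype_mk continuous_subtype_val _⟩
  let κ : ∀ a : Rn n, (sublevelFiltration X γ₂).obj a ⟶ (sublevelFiltration X γ₁).obj (vshift ε a) :=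
    fun a => TopCat.ofHom ⟨fun x => ⟨x.1, h21 a x.1 x.2⟩, Continuous.subtype_mk continuous_subtype_val _⟩
  refine ⟨hε, fun a => (singularHomology k i).map (ι a),
    fun a => (singularHomology k i).map (κ a), ?_, ?_, ?_, ?_⟩
  · intro a b h
    show (singularHomology k i).map _ ≫ (singularHomology k i).map _ =
      (singularHomology k i).map _ ≫ (singularHomology k i).map _
    rw [← Functor.map_comp, ← Functor.map_comp]
    rfl
  · intro a b h
    show (singularHomology k i).map _ ≫ (singularHomology k i).map _ =
      (singularHomology k i).map _ ≫ (singularHomology k i).map _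
    rw [← Functor.map_comp, ← Functor.map_comp]
    rfl
  · intro a
    show (singularHomology k i).map _ ≫ (singularHomology k i).map _ =
      (singularHomology k i).map _
    rw [← Functor.map_comp]
    rfl
  · intro a
    show (singularHomology k i).map _ ≫ (singularHomology k i).map _ =
      (singularHomology k i).map _
    rw [← Functor.map_comp]
    rfl

/-- **Theorem (stability of the interleaving distance).**
For any field `k`, `i ≥ 0`, a topological space `X` and continuous `γ₁, γ₂ : X → ℝⁿ`,
the modules `H_i ∘ F^S(X, γ₁)` and `H_i ∘ F^S(X, γ₂)` are `ε`-interleaved for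
`ε = sup_x ‖γ₁ x - γ₂ x‖_∞`; consequently
`d_I(H_i ∘ F^S(X, γ₁), H_i ∘ F^S(X, γ₂)) ≤ sup_x ‖γ₁ x - γ₂ x‖_∞`. -/
theorem persistentHomology_stability (k : Type) [Field k] (n : ℕ) (hn : 1 ≤ n) (i : ℕ)
    (X : TopCat.{0}) (γ₁ γ₂ : C(X, Rn n)) :
    (∀ ε : ℝ, 0 ≤ ε → (⨆ x : X, edist (γ₁ x) (γ₂ x)) = ENNReal.ofReal ε →
      Interleaved ε (persistentHomology k i X γ₁) (persistentHomology k i X γ₂)) ∧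
    dI (persistentHomology k i X γ₁) (persistentHomology k i X γ₂) ≤
      ⨆ x : X, edist (γ₁ x) (γ₂ x) := by
  have main : ∀ ε : ℝ, 0 ≤ ε → (⨆ x : X, edist (γ₁ x) (γ₂ x)) = ENNReal.ofReal ε →
      Interleaved ε (persistentHomology k i X γ₁) (persistentHomology k i X γ₂) := by
    intro ε hε hsup
    refine sublevel_interleaved k i X γ₁ γ₂ hε ?_
    intro x j
    have h1 : edist (γ₁ x) (γ₂ x) ≤ ENNReal.ofReal ε := hsup ▸ le_iSup (fun x => edist (γ₁ x) (γ₂ x)) x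
    have h2 : edist (γ₁ x j) (γ₂ x j) ≤ ENNReal.ofReal ε :=
      le_trans (edist_le_pi_edist (γ₁ x) (γ₂ x) j) h1
    rw [edist_dist] at h2
    have := (ENNReal.ofReal_le_ofReal_iff hε).1 h2
    simpa [Real.dist_eq] using this
  refine ⟨main, ?_⟩
  by_cases htop : (⨆ x : X, edist (γ₁ x) (γ₂ x)) = ⊤
  · rw [htop]; exact le_top
  · set S := ⨆ x : X, edist (γ₁ x) (γ₂ x) with hS
    have hI := main S.toReal ENNReal.toReal_nonneg (ENNReal.ofReal_toReal htop).symm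
    calc dI (persistentHomology k i X γ₁) (persistentHomology k i X γ₂)
        ≤ ENNReal.ofReal S.toReal := iInf_le_of_le S.toReal (iInf_le _ hI)
      _ = S := ENNReal.ofReal_toReal htop

end
end
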